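/- Let n ≥ 1, let 1 ≤ m < n, and let w, u be permutations of {1,2,…,n} with w ≤_m u in the m-Bruhat order. Then #{b : m < b ≤ n and w(b) > u(b)} ≤ ℓ(u) − ℓ(w), and equality holds if and only if w →^{r_m} u. -/

import Mathlib

/-- The length (number of inversions) of a permutation of `Fin n`
(representing `{1,…,n}` with `i : Fin n` standing for `i+1`). -/
def invLength {n : ℕ} (w : Equiv.Perm (Fin n)) : ℕ :=
  (Finset.univ.filter fun p : Fin n × Fin n => p.1 < p.2 ∧ w p.2 < w p.1).card

/-- `w τ_{a₁b₁} ⋯ τ_{aₛbₛ}` for the list of pairs `L = [(a₁,b₁),…,(aₛ,bₛ)]`. -/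
def chainProd {n : ℕ} (w : Equiv.Perm (Fin n)) (L : List (Fin n × Fin n)) :
    Equiv.Perm (Fin n) :=
  w * (L.map fun p => Equiv.swap p.1 p.2).prod

/-- The list `L = [(a₁,b₁),…,(aₛ,bₛ)]` is a chain witnessing `w ≤ₘ u`:
each `aᵢ ≤ m < bᵢ` (in 1-indexed terms, i.e. `(aᵢ : ℕ) < m ≤ (bᵢ : ℕ)` in 0-indexed `Fin n`),
`u = w τ_{a₁b₁} ⋯ τ_{aₛbₛ}`, and `ℓ(w τ_{a₁b₁} ⋯ τ_{aᵢbᵢ}) = ℓ(w) + i` for all `i ≤ s`. -/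
def IsMChain {n : ℕ} (m : ℕ) (w u : Equiv.Perm (Fin n)) (L : List (Fin n × Fin n)) : Prop :=
  (∀ p ∈ L, (p.1 : ℕ) < m ∧ m ≤ (p.2 : ℕ)) ∧
  u = chainProd w L ∧
  ∀ i, i ≤ L.length → invLength (chainProd w (L.take i)) = invLength w + i

/-- The `m`-Bruhat order `w ≤ₘ u`. -/
def mBruhat {n : ℕ} (m : ℕ) (w u : Equiv.Perm (Fin n)) : Prop :=
  ∃ L, IsMChain m w u L

/-- `w →^{r_m} u` : as `w ≤ₘ u`, with the `bᵢ` pairwise distinct. -/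
def rmRel {n : ℕ} (m : ℕ) (w u : Equiv.Perm (Fin n)) : Prop :=
  ∃ L, IsMChain m w u L ∧ (L.map Prod.snd).Nodup

open Equiv Finset in
set_option maxHeartbeats 2000000 in
lemma key {n : ℕ} (v : Equiv.Perm (Fin n)) (a b : Fin n)
    (hab : a < b) (hv : v a < v b) :
    invLength v + 1 ≤ invLength (v * Equiv.swap a b) := by
  classical
  set S := Finset.univ.filter fun p : Fin n × Fin n => p.1 < p.2 ∧ v p.2 < v p.1 with hS
  set v' := v * Equiv.swap a b with hv'
  set T := Finset.univ.filter fun p : Fin n × Fin n => p.1 < p.2 ∧ v' p.2 < v' p.1 with hT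
  have hvv' : ∀ x, v' x = v (Equiv.swap a b x) := fun x => rfl
  have hab' : a ≠ b := ne_of_lt hab
  have habS : (a, b) ∉ S := by
    simp only [hS, mem_filter]
    rintro ⟨-, -, h2⟩
    exact absurd hv (not_lt.2 h2.le)
  have hcard : (insert (a,b) S).card = S.card + 1 := Finset.card_insert_of_notMem habS
  -- the injection
  set f : Fin n × Fin n → Fin n × Fin n := fun p =>
    if p = (a, b) then (a, b)
    else if p.2 = a then (p.1, b)
    else if p.1 = b then (a, p.2)
    else if p.2 = b ∧ p.1 < a then (p.1, a)
    else if p.1 = a ∧ b < p.2 then (b, p.2)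
    else p with hf
  have maps : ∀ p ∈ insert (a,b) S, f p ∈ T := by
    intro p hp
    rcases Finset.mem_insert.1 hp with rfl | hp
    · simp only [hf, if_pos rfl, hT, mem_filter, mem_univ, true_and]
      refine ⟨hab, ?_⟩
      rw [hvv', hvv', Equiv.swap_apply_left, Equiv.swap_apply_right]
      exact hv
    · simp only [hS, mem_filter, mem_univ, true_and] at hp
      obtain ⟨h12, hval⟩ := hp
      have hpne : p ≠ (a, b) := by
        rintro rfl
        exact absurd hv (not_lt.2 hval.le)
      simp only [hT, mem_filter, mem_univ, true_and, hf]
      rw [if_neg hpne]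
      by_cases h2a : p.2 = a
      · have h1a : p.1 < a := h2a ▸ h12
        have h1b : p.1 ≠ b := ne_of_lt (lt_trans h1a hab)
        have h1a' : p.1 ≠ a := ne_of_lt h1a
        rw [if_pos h2a]
        refine ⟨lt_trans h1a hab, ?_⟩
        rw [hvv', hvv', Equiv.swap_apply_right, Equiv.swap_apply_of_ne_of_ne h1a' h1b]
        exact h2a ▸ hval
      · rw [if_neg h2a]
        by_cases h1b : p.1 = b
        · have h2b : b < p.2 := h1b ▸ h12
          have h2b' : p.2 ≠ b := (ne_of_lt h2b).symm
          rw [if_pos h1b]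
          refine ⟨lt_trans hab h2b, ?_⟩
          rw [hvv', hvv', Equiv.swap_apply_left, Equiv.swap_apply_of_ne_of_ne h2a h2b']
          exact lt_of_lt_of_le hval (le_of_eq (by rw [h1b]))
        · rw [if_neg h1b]
          by_cases h4 : p.2 = b ∧ p.1 < a
          · rw [if_pos h4]
            have h1a' : p.1 ≠ a := ne_of_lt h4.2
            refine ⟨h4.2, ?_⟩
            rw [hvv', hvv', Equiv.swap_apply_left, Equiv.swap_apply_of_ne_of_ne h1a' h1b]
            exact h4.1 ▸ hval
          · rw [if_neg h4]
            by_cases h5 : p.1 = a ∧ b < p.2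
            · rw [if_pos h5]
              have h2b' : p.2 ≠ b := (ne_of_lt h5.2).symm
              refine ⟨h5.2, ?_⟩
              rw [hvv', hvv', Equiv.swap_apply_right, Equiv.swap_apply_of_ne_of_ne h2a h2b']
              exact h5.1 ▸ hval
            · rw [if_neg h5]
              -- remaining cases
              by_cases h1a : p.1 = a
              · -- then a < p.2 < b  (p.2 ≠ a, p.2 ≠ b since else p = (a,b) or case5)
                have h2b : p.2 ≠ b := by
                  intro hh; exact hpne (Prod.ext h1a hh)
                have h2ltb : p.2 < b := lt_of_le_of_ne (not_lt.1 fun hh => h5 ⟨h1a, hh⟩) h2b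
                refine ⟨h12, ?_⟩
                rw [hvv', hvv', Equiv.swap_apply_of_ne_of_ne h2a h2b, h1a,
                  Equiv.swap_apply_left]
                exact lt_trans (h1a ▸ hval) hv
              · by_cases h2b : p.2 = b
                · have h1gta : a < p.1 := lt_of_le_of_ne (not_lt.1 fun hh => h4 ⟨h2b, hh⟩)
                    (Ne.symm h1a)
                  refine ⟨h12, ?_⟩
                  rw [hvv', hvv', h2b, Equiv.swap_apply_right,
                    Equiv.swap_apply_of_ne_of_ne h1a h1b]
                  exact lt_trans hv (h2b ▸ hval)
                · refine ⟨h12, ?_⟩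
                  rw [hvv', hvv', Equiv.swap_apply_of_ne_of_ne h2a h2b,
                    Equiv.swap_apply_of_ne_of_ne h1a h1b]
                  exact hval
  -- left inverse
  set g : Fin n × Fin n → Fin n × Fin n := fun q =>
    if q = (a, b) then (a, b)
    else if q.2 = b ∧ q.1 < a then (q.1, a)
    else if q.1 = a ∧ b < q.2 then (b, q.2)
    else if q.2 = a then (q.1, b)
    else if q.1 = b then (a, q.2)
    else q with hg
  have gf : ∀ p ∈ insert (a,b) S, g (f p) = p := by
    intro p hp
    rcases Finset.mem_insert.1 hp with rfl | hp
    · simp only [hf, hg, if_pos rfl]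
    · simp only [hS, mem_filter, mem_univ, true_and] at hp
      obtain ⟨h12, hval⟩ := hp
      have hpne : p ≠ (a, b) := by
        rintro rfl; exact absurd hv (not_lt.2 hval.le)
      have h12' : (p.1 : ℕ) < (p.2 : ℕ) := h12
      have hab2 : (a : ℕ) < (b : ℕ) := hab
      simp only [hf, hg]
      clear hvv' habS hcard maps hf hg hT hS hv' hp
      clear f g T S v'
      split_ifs <;>
        simp_all only [Prod.ext_iff, Fin.ext_iff, Fin.lt_def, not_and, not_lt, not_le,
          and_imp, true_and, and_true, not_true, not_false_iff, false_and, and_false] <;> try omega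
  have hinj : Set.InjOn f ((insert (a,b) S : Finset _) : Set _) := by
    intro p hp q hq hfpq
    rw [Finset.mem_coe] at hp hq
    have h1 := gf p hp
    rw [hfpq, gf q hq] at h1
    exact h1.symm
  have := Finset.card_le_card_of_injOn f maps hinj
  rw [hcard] at this
  simpa [invLength, hS, hT] using this

lemma step_lt {n : ℕ} (v : Equiv.Perm (Fin n)) (a b : Fin n) (hab : a < b)
    (h : invLength (v * Equiv.swap a b) = invLength v + 1) : v a < v b := by
  rcases lt_trichotomy (v a) (v b) with h1 | h1 | h1
  · exact h1
  · exact absurd (v.injective h1) (ne_of_lt hab)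
  · exfalso
    set v' := v * Equiv.swap a b with hv'
    have h2 : v' a < v' b := by
      show v (Equiv.swap a b a) < v (Equiv.swap a b b)
      rw [Equiv.swap_apply_left, Equiv.swap_apply_right]
      exact h1
    have h3 := key v' a b hab h2
    have h4 : v' * Equiv.swap a b = v := by
      rw [hv', mul_assoc, Equiv.swap_mul_self, mul_one]
    rw [h4, h] at h3
    omega

lemma chain_vals {n m : ℕ} : ∀ (L : List (Fin n × Fin n)) (v u : Equiv.Perm (Fin n)),
    (∀ p ∈ L, (p.1 : ℕ) < m ∧ m ≤ (p.2 : ℕ)) → u = chainProd v L →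
    (∀ i, i ≤ L.length → invLength (chainProd v (L.take i)) = invLength v + i) →
    ∀ b : Fin n, m ≤ (b : ℕ) → u b ≤ v b ∧ (u b < v b ↔ b ∈ L.map Prod.snd) := by
  intro L
  induction L with
  | nil =>
    intro v u _ hu _ b _
    simp only [chainProd, List.map_nil, List.prod_nil, mul_one] at hu
    subst hu
    simp
  | cons p L ih =>
    intro v u hL hu hlen b hb
    have hpm := hL p (List.mem_cons_self)
    have hab : p.1 < p.2 := by
      have h1 : (p.1 : ℕ) < (p.2 : ℕ) := lt_of_lt_of_le hpm.1 hpm.2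
      exact h1
    set v1 := v * Equiv.swap p.1 p.2 with hv1
    have hcons : ∀ T : List (Fin n × Fin n), chainProd v (p :: T) = chainProd v1 T := by
      intro T
      simp [chainProd, hv1, mul_assoc]
    have hlen1 : invLength v1 = invLength v + 1 := by
      have h1 := hlen 1 (by simp)
      simpa [chainProd] using h1
    have hv12 : v p.1 < v p.2 := step_lt v p.1 p.2 hab hlen1
    have hlen' : ∀ i, i ≤ L.length → invLength (chainProd v1 (L.take i)) = invLength v1 + i := by
      intro i hi
      have h2 := hlen (i+1) (by simpa using Nat.succ_le_succ hi)
      rw [List.take_succ_cons, hcons] at h2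
      omega
    have hu' : u = chainProd v1 L := by rw [hu, hcons]
    have hL' : ∀ q ∈ L, (q.1 : ℕ) < m ∧ m ≤ (q.2 : ℕ) :=
      fun q hq => hL q (List.mem_cons_of_mem _ hq)
    have IH := ih v1 u hL' hu' hlen' b hb
    by_cases hbp : b = p.2
    · have hv1b : v1 b = v p.1 := by
        show v (Equiv.swap p.1 p.2 b) = v p.1
        rw [hbp, Equiv.swap_apply_right]
      have hlt : v1 b < v b := by
        rw [hv1b, hbp]
        exact hv12
      refine ⟨le_of_lt (lt_of_le_of_lt IH.1 hlt), ?_⟩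
      constructor
      · intro _
        simp [hbp]
      · intro _
        exact lt_of_le_of_lt IH.1 hlt
    · have hbp1 : b ≠ p.1 := by
        intro hh
        rw [hh] at hb
        omega
      have hv1b : v1 b = v b := by
        show v (Equiv.swap p.1 p.2 b) = v b
        rw [Equiv.swap_apply_of_ne_of_ne hbp1 hbp]
      rw [← hv1b]
      refine ⟨IH.1, ?_⟩
      rw [IH.2]
      simp [hbp]

lemma chain_D {n m : ℕ} (L : List (Fin n × Fin n)) (w u : Equiv.Perm (Fin n))
    (h : IsMChain m w u L) :
    (Finset.univ.filter fun b : Fin n => m ≤ (b : ℕ) ∧ u b < w b) = (L.map Prod.snd).toFinset ∧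
    invLength u = invLength w + L.length := by
  obtain ⟨hLm, hu, hlen⟩ := h
  have hvals := chain_vals L w u hLm hu hlen
  constructor
  · ext b
    simp only [Finset.mem_filter, Finset.mem_univ, true_and, List.mem_toFinset]
    constructor
    · rintro ⟨hb, hlt⟩
      exact ((hvals b hb).2).1 hlt
    · intro hb
      have hbm : m ≤ (b : ℕ) := by
        obtain ⟨q, hq, rfl⟩ := List.mem_map.1 hb
        exact (hLm q hq).2
      exact ⟨hbm, ((hvals b hbm).2).2 hb⟩
  · have h1 := hlen L.length le_rfl
    rw [List.take_length, ← hu] at h1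
    exact h1


/-- if `w ≤ₘ u` then `#{b : m < b ≤ n, w(b) > u(b)} ≤ ℓ(u) − ℓ(w)`,
with equality if and only if `w →^{r_m} u`. -/
theorem stmt2 (n m : ℕ) (hn : 1 ≤ n) (hm : 1 ≤ m) (hmn : m < n)
    (w u : Equiv.Perm (Fin n)) (h : mBruhat m w u) :
    (Finset.univ.filter fun b : Fin n => m ≤ (b : ℕ) ∧ u b < w b).card
      ≤ invLength u - invLength w ∧
    ((Finset.univ.filter fun b : Fin n => m ≤ (b : ℕ) ∧ u b < w b).card
      = invLength u - invLength w ↔ rmRel m w u) := by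
  obtain ⟨L, hL⟩ := h
  obtain ⟨hD, hlenu⟩ := chain_D L w u hL
  have hsub : invLength u - invLength w = L.length := by omega
  have hcard : (L.map Prod.snd).toFinset.card ≤ L.length := by
    calc (L.map Prod.snd).toFinset.card ≤ (L.map Prod.snd).length := List.toFinset_card_le _
      _ = L.length := by simp
  constructor
  · rw [hD, hsub]
    exact hcard
  · rw [hsub]
    constructor
    · intro heq
      rw [hD] at heq
      refine ⟨L, hL, ?_⟩
      have h1 : (L.map Prod.snd).dedup.length = (L.map Prod.snd).length := by
        rw [List.card_toFinset] at heq
        rw [List.length_map]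
        exact heq
      have h2 := (List.dedup_sublist (L.map Prod.snd)).eq_of_length h1
      exact h2 ▸ (List.nodup_dedup _)
    · rintro ⟨L', hL', hnd⟩
      obtain ⟨hD', hlenu'⟩ := chain_D L' w u hL'
      have hlL : L'.length = L.length := by omega
      rw [hD', List.toFinset_card_of_nodup hnd, List.length_map, hlL]
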